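/- Under the hypotheses of the SCN step inequality—f in a real Hilbert space H, 0 < r < 1, nonnegative (μ_m) with μ_m ≤ 1-r and μ_m → 0, e_0 = f, e_m = e_{m-1} - (⟨e_{m-1},g_m⟩/‖g_m‖²)·g_m with 0 < ‖g_m‖ ≤ b_g and ⟨e_{m-1},g_m⟩² ≥ b_g²(1-r-μ_m)‖e_{m-1}‖²—the residuals converge in norm: ‖e_m‖ → 0 as m → ∞. -/

import Mathlib

open Filter
open scoped RealInnerProductSpace

lemma aux_tendsto_zero (a : ℕ → ℝ) (q : ℝ) (hq0 : 0 ≤ q) (hq1 : q < 1)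
    (ha : ∀ n, 0 ≤ a n) (N : ℕ) (hstep : ∀ n, N ≤ n → a (n + 1) ≤ q * a n) :
    Tendsto a atTop (nhds 0) := by
  have key : ∀ k, a (N + k) ≤ q ^ k * a N := by
    intro k
    induction k with
    | zero => simp
    | succ k ih =>
      have := hstep (N + k) (Nat.le_add_right _ _)
      calc a (N + (k + 1)) = a (N + k + 1) := by ring_nf
        _ ≤ q * a (N + k) := this
        _ ≤ q * (q ^ k * a N) := by
            exact mul_le_mul_of_nonneg_left ih hq0
        _ = q ^ (k + 1) * a N := by ring
  have hgeom : Tendsto (fun k => q ^ k * a N) atTop (nhds 0) := by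
    simpa using (tendsto_pow_atTop_nhds_zero_of_lt_one hq0 hq1).mul_const (a N)
  have h1 : Tendsto (fun k => a (N + k)) atTop (nhds 0) :=
    squeeze_zero (fun k => ha _) key hgeom
  have := h1.comp (tendsto_sub_atTop_nat N)
  refine (tendsto_add_atTop_iff_nat N).mp ?_
  simpa [Nat.add_comm] using h1

theorem scn_residuals_tendsto_zero
    {H : Type*} [NormedAddCommGroup H] [InnerProductSpace ℝ H]
    (f : H) (r b_g : ℝ) (μ : ℕ → ℝ) (e g : ℕ → H)
    (hr : 0 < r ∧ r < 1)
    (hμ : ∀ m, 0 ≤ μ (m + 1) ∧ μ (m + 1) ≤ 1 - r)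
    (hμ0 : Tendsto (fun m => μ (m + 1)) atTop (nhds 0))
    (he0 : e 0 = f)
    (hg : ∀ m, 0 < ‖g (m + 1)‖ ∧ ‖g (m + 1)‖ ≤ b_g)
    (hsup : ∀ m, b_g ^ 2 * (1 - r - μ (m + 1)) * ‖e m‖ ^ 2 ≤ ⟪e m, g (m + 1)⟫ ^ 2)
    (hrec : ∀ m, e (m + 1) = e m - (⟪e m, g (m + 1)⟫ / ‖g (m + 1)‖ ^ 2) • g (m + 1)) :
    Tendsto (fun m => ‖e m‖) atTop (nhds 0) := by
  -- step inequality: ‖e (m+1)‖² ≤ (r + μ (m+1)) * ‖e m‖²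
  have step : ∀ m, ‖e (m + 1)‖ ^ 2 ≤ (r + μ (m + 1)) * ‖e m‖ ^ 2 := by
    intro m
    set G := g (m + 1) with hG
    have hGpos : 0 < ‖G‖ := (hg m).1
    have hGle : ‖G‖ ≤ b_g := (hg m).2
    have hG2 : (0:ℝ) < ‖G‖ ^ 2 := by positivity
    set c := ⟪e m, G⟫ with hc
    have hnorm : ‖e (m + 1)‖ ^ 2 = ‖e m‖ ^ 2 - c ^ 2 / ‖G‖ ^ 2 := by
      rw [hrec m]
      rw [@norm_sub_sq_real]
      rw [real_inner_smul_right, norm_smul, Real.norm_eq_abs]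
      rw [mul_pow, sq_abs]
      field_simp
      rw [← hG, ← hc]
      have h1 : c ^ 2 / ‖G‖ ^ 2 * ‖G‖ ^ 2 = c ^ 2 := div_mul_cancel₀ _ hG2.ne'
      linear_combination (-1:ℝ) * h1
    have hb2 : ‖G‖ ^ 2 ≤ b_g ^ 2 := by
      have := pow_le_pow_left₀ (le_of_lt hGpos) hGle 2
      exact this
    have hμm := hμ m
    have hne : (1 - r - μ (m + 1)) ≥ 0 := by linarith [hμm.2]
    -- c² / ‖G‖² ≥ (1 - r - μ) ‖e m‖²
    have key : (1 - r - μ (m + 1)) * ‖e m‖ ^ 2 ≤ c ^ 2 / ‖G‖ ^ 2 := by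
      rw [le_div_iff₀ hG2]
      calc (1 - r - μ (m + 1)) * ‖e m‖ ^ 2 * ‖G‖ ^ 2
          ≤ (1 - r - μ (m + 1)) * ‖e m‖ ^ 2 * b_g ^ 2 := by
            apply mul_le_mul_of_nonneg_left hb2
            positivity
        _ = b_g ^ 2 * (1 - r - μ (m + 1)) * ‖e m‖ ^ 2 := by ring
        _ ≤ c ^ 2 := hsup m
    rw [hnorm]
    nlinarith [key]
  -- eventually (r + μ (m+1)) ≤ (1 + r)/2 =: q
  set q := (1 + r) / 2 with hq
  have hq0 : 0 ≤ q := by have := hr.1; positivity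
  have hq1 : q < 1 := by have := hr.2; rw [hq]; linarith
  have hev : ∀ᶠ m in atTop, μ (m + 1) ≤ (1 - r) / 2 := by
    have := hμ0.eventually_le_const (show (0:ℝ) < (1 - r)/2 by linarith [hr.2])
    filter_upwards [this] with m hm using hm
  obtain ⟨N, hN⟩ := eventually_atTop.mp hev
  have hsq : Tendsto (fun m => ‖e m‖ ^ 2) atTop (nhds 0) := by
    apply aux_tendsto_zero _ q hq0 hq1 (fun n => by positivity) N
    intro n hn
    have h1 := step n
    have h2 : r + μ (n + 1) ≤ q := by have := hN n hn; rw [hq]; linarith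
    have h3 : (0:ℝ) ≤ ‖e n‖ ^ 2 := by positivity
    nlinarith
  have : Tendsto (fun m => Real.sqrt (‖e m‖ ^ 2)) atTop (nhds (Real.sqrt 0)) :=
    (Real.continuous_sqrt.tendsto 0).comp hsq
  simpa [Real.sqrt_sq (norm_nonneg _)] using this
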